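/- Let $f = x^2y^2 + y^2z^2 + z^2x^2 - 2xyz(x+y+z) \in \mathbb{C}[x,y,z]$ (the three-cuspidal quartic). Then the Hilbert–Poincaré series of the Milnor algebra $M(f) = S/J_f$ satisfies $\dim M(f)_0 = 1$, $\dim M(f)_1 = 3$, $\dim M(f)_2 = 6$, $\dim M(f)_3 = 7$, and $\dim M(f)_k = 6$ for all $k \geq 4$. -/

import Mathlib

/-!
STATEMENT 10: For the three-cuspidal quartic
`f = x²y² + y²z² + z²x² - 2xyz(x+y+z)` in `ℂ[x,y,z]`, the Milnor algebra
`M(f) = S/J_f` satisfies `dim M(f)_0 = 1`, `dim M(f)_1 = 3`, `dim M(f)_2 = 6`,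
`dim M(f)_3 = 7`, and `dim M(f)_k = 6` for all `k ≥ 4`.
-/

open MvPolynomial

noncomputable section

abbrev S3 := MvPolynomial (Fin 3) ℂ

def jacobianIdeal (f : S3) : Ideal S3 :=
  Ideal.span (Set.range fun i : Fin 3 => pderiv i f)

/-- `dim_ℂ (S/I)_k`. -/
def gradedDim (I : Ideal S3) (k : ℕ) : ℕ :=
  Module.finrank ℂ (Submodule.map (Ideal.Quotient.mkₐ ℂ I).toLinearMap
    (homogeneousSubmodule (Fin 3) ℂ k))

def FF : S3 := X 0 ^ 2 * X 1 ^ 2 + X 1 ^ 2 * X 2 ^ 2 + X 2 ^ 2 * X 0 ^ 2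
      - 2 * X 0 * X 1 * X 2 * (X 0 + X 1 + X 2)

lemma hpd2 : (pderiv (0:Fin 3) (2:S3)) = 0 ∧ (pderiv (1:Fin 3) (2:S3)) = 0 ∧ (pderiv (2:Fin 3) (2:S3)) = 0 := by
  refine ⟨?_, ?_, ?_⟩ <;> rw [(map_ofNat (C : ℂ →+* S3) 2).symm, pderiv_C]

lemma hfx : pderiv (0:Fin 3) FF =
    2*X 0*X 1^2 + 2*X 0*X 2^2 - 4*X 0*X 1*X 2 - 2*X 1^2*X 2 - 2*X 1*X 2^2 := by
  simp [FF, pderiv_mul, pderiv_pow, pderiv_X, Pi.single_apply, hpd2.1]; ring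

lemma hfy : pderiv (1:Fin 3) FF =
    2*X 0^2*X 1 + 2*X 1*X 2^2 - 2*X 0^2*X 2 - 4*X 0*X 1*X 2 - 2*X 0*X 2^2 := by
  simp [FF, pderiv_mul, pderiv_pow, pderiv_X, Pi.single_apply, hpd2.2.1]; ring

lemma hfz : pderiv (2:Fin 3) FF =
    2*X 1^2*X 2 + 2*X 0^2*X 2 - 2*X 0^2*X 1 - 2*X 0*X 1^2 - 4*X 0*X 1*X 2 := by
  simp [FF, pderiv_mul, pderiv_pow, pderiv_X, Pi.single_apply, hpd2.2.2]; ring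

def Ic : Ideal S3 := Ideal.span (Set.range fun i : Fin 3 => pderiv i FF)
abbrev Rq := S3 ⧸ Ic
def qm : S3 →ₐ[ℂ] Rq := Ideal.Quotient.mkₐ ℂ Ic

lemma hq (i : Fin 3) : qm (pderiv i FF) = 0 := by
  rw [qm, Ideal.Quotient.mkₐ_eq_mk, Ideal.Quotient.eq_zero_iff_mem]
  exact Ideal.subset_span ⟨i, rfl⟩

lemma alg_cancel {c : ℂ} (hc : c ≠ 0) {t : Rq} (h : algebraMap ℂ Rq c * t = 0) : t = 0 := by
  have h2 := congrArg (fun r => algebraMap ℂ Rq c⁻¹ * r) h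
  simpa [← mul_assoc, ← map_mul, inv_mul_cancel₀ hc] using h2

lemma quot_rel {g c0 c1 c2 : S3}
    (key : g = c0 * pderiv 0 FF + c1 * pderiv 1 FF + c2 * pderiv 2 FF) : qm g = 0 := by
  have h := congrArg qm key
  simp only [map_add, map_mul, hq, mul_zero, add_zero] at h
  exact h

lemma key_rel {c : ℂ} (hc : c ≠ 0) {g : S3} {t : Rq} (h1 : qm g = algebraMap ℂ Rq c * t)
    (h2 : qm g = 0) : t = 0 := alg_cancel hc (h1 ▸ h2)

abbrev xq : Rq := qm (X 0)
abbrev yq : Rq := qm (X 1)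
abbrev zq : Rq := qm (X 2)

lemma rho0 : xq * yq * zq = 0 := by
  refine key_rel (c := 12) (by norm_num) (g := 12*(X 0*X 1*X 2)) (by simp only [map_ofNat, map_mul, map_pow]) ?_
  exact quot_rel (c0 := -1) (c1 := -1) (c2 := -1) (by rw [hfx, hfy, hfz]; ring)

lemma rho1 : xq^2 * yq^2 = 0 := by
  refine key_rel (c := 12) (by norm_num) (g := 12*(X 0^2*X 1^2)) (by simp only [map_ofNat, map_mul, map_pow]) ?_
  exact quot_rel (c0 := 2*X 0 - X 1) (c1 := 2*X 1 - X 0) (c2 := -(X 0 + X 1 + 3*X 2))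
    (by rw [hfx, hfy, hfz]; ring)

lemma rho2 : yq^2 * zq^2 = 0 := by
  refine key_rel (c := 12) (by norm_num) (g := 12*(X 1^2*X 2^2)) (by simp only [map_ofNat, map_mul, map_pow]) ?_
  exact quot_rel (c0 := -(3*X 0 + X 1 + X 2)) (c1 := 2*X 1 - X 2) (c2 := 2*X 2 - X 1)
    (by rw [hfx, hfy, hfz]; ring)

lemma rho3 : zq^2 * xq^2 = 0 := by
  refine key_rel (c := 12) (by norm_num) (g := 12*(X 2^2*X 0^2)) (by simp only [map_ofNat, map_mul, map_pow]) ?_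
  exact quot_rel (c0 := 2*X 0 - X 2) (c1 := -(X 0 + 3*X 1 + X 2)) (c2 := 2*X 2 - X 0)
    (by rw [hfx, hfy, hfz]; ring)

lemma rho4 : xq * yq^3 = yq^3 * zq := by
  rw [← sub_eq_zero]
  refine key_rel (c := 4) (by norm_num) (g := 4*(X 0*X 1^3 - X 1^3*X 2)) (by simp only [map_ofNat, map_mul, map_pow, map_sub]) ?_
  exact quot_rel (c0 := X 1 - X 0) (c1 := 0) (c2 := X 2 - X 1) (by rw [hfx, hfz]; ring)

lemma rho5 : yq * zq^3 = zq^3 * xq := by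
  rw [← sub_eq_zero]
  refine key_rel (c := 4) (by norm_num) (g := 4*(X 1*X 2^3 - X 2^3*X 0)) (by simp only [map_ofNat, map_mul, map_pow, map_sub]) ?_
  exact quot_rel (c0 := X 0 - X 2) (c1 := X 2 - X 1) (c2 := 0) (by rw [hfx, hfy]; ring)

lemma rho6 : xq^3 * zq = xq^3 * yq := by
  rw [← sub_eq_zero]
  refine key_rel (c := 4) (by norm_num) (g := 4*(X 0^3*X 2 - X 0^3*X 1)) (by simp only [map_ofNat, map_mul, map_pow, map_sub]) ?_
  exact quot_rel (c0 := 0) (c1 := X 1 - X 0) (c2 := X 0 - X 2) (by rw [hfy, hfz]; ring)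

lemma rho7 : xq * yq^2 = -(xq * zq^2) + yq^2 * zq + yq * zq^2 := by
  rw [← sub_eq_zero]
  refine key_rel (c := 6) (by norm_num)
    (g := 6*(X 0*X 1^2 - (-(X 0*X 2^2) + X 1^2*X 2 + X 1*X 2^2)))
    (by simp only [map_ofNat, map_mul, map_pow, map_sub, map_add, map_neg]) ?_
  exact quot_rel (c0 := 2) (c1 := -1) (c2 := -1) (by rw [hfx, hfy, hfz]; ring)

lemma rho8 : xq^2 * yq = -(yq * zq^2) + xq^2 * zq + xq * zq^2 := by
  rw [← sub_eq_zero]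
  refine key_rel (c := 6) (by norm_num)
    (g := 6*(X 0^2*X 1 - (-(X 1*X 2^2) + X 0^2*X 2 + X 0*X 2^2)))
    (by simp only [map_ofNat, map_mul, map_pow, map_sub, map_add, map_neg]) ?_
  exact quot_rel (c0 := -1) (c1 := 2) (c2 := -1) (by rw [hfx, hfy, hfz]; ring)

/-! ### Spanning side -/

lemma qm_mono (a b c : ℕ) : qm (X 0^a * X 1^b * X 2^c) = xq^a * yq^b * zq^c := by
  simp [map_mul, map_pow]

lemma bridge {n : ℕ} {W : Submodule ℂ Rq}
    (h : ∀ a b c : ℕ, a + b + c = n → qm (X 0^a * X 1^b * X 2^c) ∈ W) :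
    Submodule.map (Ideal.Quotient.mkₐ ℂ Ic).toLinearMap (homogeneousSubmodule (Fin 3) ℂ n) ≤ W := by
  rintro r ⟨g, hg, rfl⟩
  rw [SetLike.mem_coe, mem_homogeneousSubmodule] at hg
  have hqg : (Ideal.Quotient.mkₐ ℂ Ic).toLinearMap g = qm g := rfl
  rw [hqg, g.as_sum, map_sum]
  apply Submodule.sum_mem
  intro d hd
  have hdeg : d 0 + d 1 + d 2 = n := by
    have h1 : d.degree = d 0 + d 1 + d 2 := by
      rw [Finsupp.degree_apply]
      rw [Finset.sum_subset (Finset.subset_univ _) (fun i _ hi => Finsupp.notMem_support_iff.mp hi)]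
      exact Fin.sum_univ_three d
    rw [← h1, Finsupp.degree_eq_weight_one]
    exact hg (mem_support_iff.mp hd)
  have hmono : monomial d (coeff d g) = C (coeff d g) * (X 0 ^ (d 0) * X 1 ^ (d 1) * X 2 ^ (d 2) : S3) := by
    rw [monomial_eq]
    congr 1
    rw [Finsupp.prod_pow]
    exact Fin.prod_univ_three _
  rw [hmono, ← smul_eq_C_mul, map_smul]
  exact W.smul_mem _ (h _ _ _ hdeg)

/-- stable basis family, `e = n - 1` -/
def Bv (e : ℕ) : Fin 6 → Rq := ![xq^(e+1), xq^e*yq, yq^(e+1), yq^e*zq, zq^(e+1), zq^e*xq]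

lemma zero1 (a b c : ℕ) : xq^(a+1) * yq^(b+1) * zq^(c+1) = 0 := by
  have h : xq^(a+1) * yq^(b+1) * zq^(c+1) = xq^a*yq^b*zq^c * (xq*yq*zq) := by ring
  rw [h, rho0, mul_zero]

lemma zero2 (a b : ℕ) : xq^(a+2) * yq^(b+2) = 0 := by
  have h : xq^(a+2) * yq^(b+2) = xq^a*yq^b * (xq^2*yq^2) := by ring
  rw [h, rho1, mul_zero]

lemma zero3 (b c : ℕ) : yq^(b+2) * zq^(c+2) = 0 := by
  have h : yq^(b+2) * zq^(c+2) = yq^b*zq^c * (yq^2*zq^2) := by ring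
  rw [h, rho2, mul_zero]

lemma zero4 (a c : ℕ) : xq^(a+2) * zq^(c+2) = 0 := by
  have h : xq^(a+2) * zq^(c+2) = xq^a*zq^c * (zq^2*xq^2) := by ring
  rw [h, rho3, mul_zero]

lemma red4 (b : ℕ) : xq * yq^(b+3) = yq^(b+3) * zq := by
  have h1 : xq * yq^(b+3) = yq^b * (xq*yq^3) := by ring
  rw [h1, rho4]; ring

lemma red5 (c : ℕ) : yq * zq^(c+3) = zq^(c+3) * xq := by
  have h1 : yq * zq^(c+3) = zq^c * (yq*zq^3) := by ring
  rw [h1, rho5]; ring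

lemma red6 (a : ℕ) : xq^(a+3) * zq = xq^(a+3) * yq := by
  have h1 : xq^(a+3) * zq = xq^a * (xq^3*zq) := by ring
  rw [h1, rho6]; ring

lemma span_high (m : ℕ) (a b c : ℕ) (h : a + b + c = m + 4) :
    qm (X 0^a * X 1^b * X 2^c) ∈ Submodule.span ℂ (Set.range (Bv (m+3))) := by
  have hB : ∀ i, Bv (m+3) i ∈ Submodule.span ℂ (Set.range (Bv (m+3))) :=
    fun i => Submodule.subset_span ⟨i, rfl⟩
  have e0 : Bv (m+3) 0 = xq^(m+4) := rfl
  have e1 : Bv (m+3) 1 = xq^(m+3)*yq := rfl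
  have e2 : Bv (m+3) 2 = yq^(m+4) := rfl
  have e3 : Bv (m+3) 3 = yq^(m+3)*zq := rfl
  have e4 : Bv (m+3) 4 = zq^(m+4) := rfl
  have e5 : Bv (m+3) 5 = zq^(m+3)*xq := rfl
  rw [qm_mono]
  rcases a with _ | a
  · -- a = 0
    rcases b with _ | b
    · -- b = 0 : pure z
      have hc : c = m + 4 := by omega
      subst hc
      have : xq^0*yq^0*zq^(m+4) = Bv (m+3) 4 := by rw [e4]; ring
      rw [this]; exact hB 4
    · rcases c with _ | c
      · -- c = 0 : pure y
        have hb : b + 1 = m + 4 := by omega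
        rw [hb]
        have : xq^0*yq^(m+4)*zq^0 = Bv (m+3) 2 := by rw [e2]; ring
        rw [this]; exact hB 2
      · rcases b with _ | b
        · -- b = 1 : y * z^(c+1), c+1 = m+3
          have hc : c = m + 2 := by omega
          subst hc
          have : xq^0*yq^1*zq^(m+3) = yq*zq^(m+3) := by ring
          rw [this, red5 m]
          have : zq^(m+3)*xq = Bv (m+3) 5 := by rw [e5]
          rw [this]; exact hB 5
        · rcases c with _ | c
          · -- c = 1 : y^(b+2)*z, b+2 = m+3
            have hb : b = m + 1 := by omega
            subst hb
            have : xq^0*yq^(m+3)*zq^1 = Bv (m+3) 3 := by rw [e3]; ring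
            rw [this]; exact hB 3
          · -- b,c ≥ 2 : zero
            have : xq^0*yq^(b+2)*zq^(c+2) = yq^(b+2)*zq^(c+2) := by ring
            rw [this, zero3]; exact Submodule.zero_mem _
  · rcases b with _ | b
    · -- b = 0
      rcases c with _ | c
      · -- pure x
        have ha : a + 1 = m + 4 := by omega
        rw [ha]
        have : xq^(m+4)*yq^0*zq^0 = Bv (m+3) 0 := by rw [e0]; ring
        rw [this]; exact hB 0
      · rcases a with _ | a
        · -- a = 1 : x*z^(c+1), c+1 = m+3
          have hc : c = m + 2 := by omega
          subst hc
          have : xq^1*yq^0*zq^(m+3) = Bv (m+3) 5 := by rw [e5]; ring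
          rw [this]; exact hB 5
        · rcases c with _ | c
          · -- c = 1 : x^(a+2)*z, a+2 = m+3
            have ha : a = m + 1 := by omega
            subst ha
            have h1 : xq^(m+3)*yq^0*zq^1 = xq^(m+3)*zq := by ring
            rw [h1, red6 m]
            have : xq^(m+3)*yq = Bv (m+3) 1 := by rw [e1]
            rw [this]; exact hB 1
          · have h1 : xq^(a+2)*yq^0*zq^(c+2) = xq^(a+2)*zq^(c+2) := by ring
            rw [h1, zero4]; exact Submodule.zero_mem _
    · rcases c with _ | c
      · -- c = 0
        rcases a with _ | a
        · -- a = 1 : x*y^(b+1), b+1 = m+3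
          have hb : b = m + 2 := by omega
          subst hb
          have h1 : xq^1*yq^(m+3)*zq^0 = xq*yq^(m+3) := by ring
          rw [h1, red4 m]
          have : yq^(m+3)*zq = Bv (m+3) 3 := by rw [e3]
          rw [this]; exact hB 3
        · rcases b with _ | b
          · -- b = 1 : x^(a+2)*y, a+2 = m+3
            have ha : a = m + 1 := by omega
            subst ha
            have : xq^(m+3)*yq^1*zq^0 = Bv (m+3) 1 := by rw [e1]; ring
            rw [this]; exact hB 1
          · have h1 : xq^(a+2)*yq^(b+2)*zq^0 = xq^(a+2)*yq^(b+2) := by ring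
            rw [h1, zero2]; exact Submodule.zero_mem _
      · -- a,b,c ≥ 1 : zero
        rw [zero1]; exact Submodule.zero_mem _

def B0v : Fin 1 → Rq := ![1]
def B1v : Fin 3 → Rq := ![xq, yq, zq]
def B2v : Fin 6 → Rq := ![xq^2, yq^2, zq^2, xq*yq, yq*zq, xq*zq]
def B3v : Fin 7 → Rq := ![xq^3, yq^3, zq^3, xq^2*zq, xq*zq^2, yq^2*zq, yq*zq^2]

lemma span0 (a b c : ℕ) (h : a + b + c = 0) :
    qm (X 0^a * X 1^b * X 2^c) ∈ Submodule.span ℂ (Set.range B0v) := by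
  have hB : ∀ i, B0v i ∈ Submodule.span ℂ (Set.range B0v) := fun i => Submodule.subset_span ⟨i, rfl⟩
  obtain ⟨rfl, rfl, rfl⟩ : a = 0 ∧ b = 0 ∧ c = 0 := by omega
  rw [qm_mono]
  simpa [B0v] using hB 0

lemma span1 (a b c : ℕ) (h : a + b + c = 1) :
    qm (X 0^a * X 1^b * X 2^c) ∈ Submodule.span ℂ (Set.range B1v) := by
  have hB : ∀ i, B1v i ∈ Submodule.span ℂ (Set.range B1v) := fun i => Submodule.subset_span ⟨i, rfl⟩
  rw [qm_mono]
  have ha : a ≤ 1 := by omega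
  have hb : b ≤ 1 := by omega
  have hc : c ≤ 1 := by omega
  interval_cases a <;> interval_cases b <;> interval_cases c <;>
    first
      | exact absurd h (by omega)
      | (simp only [pow_zero, pow_one, one_mul, mul_one]
         first | exact hB 0 | exact hB 1 | exact hB 2)

lemma span2 (a b c : ℕ) (h : a + b + c = 2) :
    qm (X 0^a * X 1^b * X 2^c) ∈ Submodule.span ℂ (Set.range B2v) := by
  have hB : ∀ i, B2v i ∈ Submodule.span ℂ (Set.range B2v) := fun i => Submodule.subset_span ⟨i, rfl⟩
  rw [qm_mono]
  have ha : a ≤ 2 := by omega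
  have hb : b ≤ 2 := by omega
  have hc : c ≤ 2 := by omega
  interval_cases a <;> interval_cases b <;> interval_cases c <;>
    first
      | exact absurd h (by omega)
      | (simp only [pow_zero, pow_one, one_mul, mul_one]
         first | exact hB 0 | exact hB 1 | exact hB 2 | exact hB 3 | exact hB 4 | exact hB 5)

set_option maxHeartbeats 1000000 in
lemma span3 (a b c : ℕ) (h : a + b + c = 3) :
    qm (X 0^a * X 1^b * X 2^c) ∈ Submodule.span ℂ (Set.range B3v) := by
  have hB : ∀ i, B3v i ∈ Submodule.span ℂ (Set.range B3v) := fun i => Submodule.subset_span ⟨i, rfl⟩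
  have h0 : xq^3 ∈ Submodule.span ℂ (Set.range B3v) := hB 0
  have h1 : yq^3 ∈ Submodule.span ℂ (Set.range B3v) := hB 1
  have h2 : zq^3 ∈ Submodule.span ℂ (Set.range B3v) := hB 2
  have h3 : xq^2*zq ∈ Submodule.span ℂ (Set.range B3v) := hB 3
  have h4 : xq*zq^2 ∈ Submodule.span ℂ (Set.range B3v) := hB 4
  have h5 : yq^2*zq ∈ Submodule.span ℂ (Set.range B3v) := hB 5
  have h6 : yq*zq^2 ∈ Submodule.span ℂ (Set.range B3v) := hB 6
  rw [qm_mono]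
  have ha : a ≤ 3 := by omega
  have hb : b ≤ 3 := by omega
  have hc : c ≤ 3 := by omega
  interval_cases a <;> interval_cases b <;> interval_cases c <;>
    first
      | exact absurd h (by omega)
      | (simp only [pow_zero, pow_one, one_mul, mul_one]
         first
           | (rw [rho0]; exact Submodule.zero_mem _)
           | with_reducible exact h0 | with_reducible exact h1 | with_reducible exact h2 | with_reducible exact h3 | with_reducible exact h4 | with_reducible exact h5 | with_reducible exact h6
           | (rw [rho7]; exact Submodule.add_mem _ (Submodule.add_mem _
                (Submodule.neg_mem _ (hB 4)) (hB 5)) (hB 6))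
           | (rw [rho8]; exact Submodule.add_mem _ (Submodule.add_mem _
                (Submodule.neg_mem _ (hB 6)) (hB 3)) (hB 4)))

/-! ### finrank helpers -/

lemma finrank_span_range_le {k : ℕ} (b : Fin k → Rq) :
    Module.finrank ℂ (Submodule.span ℂ (Set.range b)) ≤ k := by
  classical
  refine (finrank_span_le_card _).trans ?_
  rw [Set.toFinset_range]
  exact Finset.card_image_le.trans (by simp)

instance span_fd {k : ℕ} (b : Fin k → Rq) :
    Module.Finite ℂ (Submodule.span ℂ (Set.range b)) :=
  FiniteDimensional.span_of_finite ℂ (Set.finite_range b)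

def Qn (n : ℕ) : Submodule ℂ Rq :=
  Submodule.map (Ideal.Quotient.mkₐ ℂ Ic).toLinearMap (homogeneousSubmodule (Fin 3) ℂ n)

lemma Qn_le_span {n k : ℕ} (b : Fin k → Rq)
    (h : ∀ a b' c : ℕ, a + b' + c = n → qm (X 0^a * X 1^b' * X 2^c) ∈ Submodule.span ℂ (Set.range b)) :
    Qn n ≤ Submodule.span ℂ (Set.range b) := bridge h

lemma Qn_fd {n k : ℕ} (b : Fin k → Rq)
    (h : Qn n ≤ Submodule.span ℂ (Set.range b)) : Module.Finite ℂ (Qn n) :=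
  Submodule.finiteDimensional_of_le h

lemma Qn_ub {n k : ℕ} (b : Fin k → Rq)
    (h : Qn n ≤ Submodule.span ℂ (Set.range b)) : Module.finrank ℂ (Qn n) ≤ k :=
  (Submodule.finrank_mono h).trans (finrank_span_range_le b)

/-! ### evaluation maps into dual numbers -/

open DualNumber TrivSqZeroExt

lemma eps_sq : (ε : DualNumber ℂ)^2 = 0 := by rw [sq]; exact eps_mul_eps

lemma eps_pow_succ_succ (k : ℕ) : (ε : DualNumber ℂ)^(k+2) = 0 := by
  rw [pow_add, eps_sq, mul_zero]

def ev0 : S3 →ₐ[ℂ] DualNumber ℂ := aeval ![1, ε, ε]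
def ev1 : S3 →ₐ[ℂ] DualNumber ℂ := aeval ![ε, 1, ε]
def ev2 : S3 →ₐ[ℂ] DualNumber ℂ := aeval ![ε, ε, 1]

lemma ev_ker_aux (ev : S3 →ₐ[ℂ] DualNumber ℂ)
    (h0 : ev (pderiv 0 FF) = 0) (h1 : ev (pderiv 1 FF) = 0) (h2 : ev (pderiv 2 FF) = 0) :
    ∀ g ∈ Ic, ev g = 0 := by
  have hle : Ic ≤ RingHom.ker ev.toRingHom := by
    rw [Ic, Ideal.span_le]
    rintro p ⟨i, rfl⟩
    simp only [SetLike.mem_coe, RingHom.mem_ker]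
    fin_cases i
    · exact h0
    · exact h1
    · exact h2
  intro g hg
  exact RingHom.mem_ker.mp (hle hg)

lemma eps_cube : (ε : DualNumber ℂ)^3 = 0 := eps_pow_succ_succ 1

lemma ev0_ker : ∀ g ∈ Ic, ev0 g = 0 := by
  refine ev_ker_aux ev0 ?_ ?_ ?_ <;>
    [rw [hfx]; rw [hfy]; rw [hfz]] <;>
  · simp [ev0, map_ofNat]
    ring_nf
    simp [eps_sq, eps_cube]

lemma ev1_ker : ∀ g ∈ Ic, ev1 g = 0 := by
  refine ev_ker_aux ev1 ?_ ?_ ?_ <;>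
    [rw [hfx]; rw [hfy]; rw [hfz]] <;>
  · simp [ev1, map_ofNat]
    ring_nf
    simp [eps_sq, eps_cube]

lemma ev2_ker : ∀ g ∈ Ic, ev2 g = 0 := by
  refine ev_ker_aux ev2 ?_ ?_ ?_ <;>
    [rw [hfx]; rw [hfy]; rw [hfz]] <;>
  · simp [ev2, map_ofNat]
    ring_nf
    simp [eps_sq, eps_cube]

def lv0 : Rq →ₐ[ℂ] DualNumber ℂ := Ideal.Quotient.liftₐ Ic ev0 ev0_ker
def lv1 : Rq →ₐ[ℂ] DualNumber ℂ := Ideal.Quotient.liftₐ Ic ev1 ev1_ker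
def lv2 : Rq →ₐ[ℂ] DualNumber ℂ := Ideal.Quotient.liftₐ Ic ev2 ev2_ker

lemma lv_qm (ev : S3 →ₐ[ℂ] DualNumber ℂ) (hker : ∀ g ∈ Ic, ev g = 0) (p : S3) :
    (Ideal.Quotient.liftₐ Ic ev hker) (qm p) = ev p := by
  simp [qm, Ideal.Quotient.liftₐ_apply, Ideal.Quotient.mkₐ_eq_mk, Ideal.Quotient.lift_mk]
  exact Ideal.Quotient.lift_mk _ _ _

lemma lv0_x : lv0 xq = 1 := by rw [lv0, lv_qm]; simp [ev0]
lemma lv0_y : lv0 yq = ε := by rw [lv0, lv_qm]; simp [ev0]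
lemma lv0_z : lv0 zq = ε := by rw [lv0, lv_qm]; simp [ev0]
lemma lv1_x : lv1 xq = ε := by rw [lv1, lv_qm]; simp [ev1]
lemma lv1_y : lv1 yq = 1 := by rw [lv1, lv_qm]; simp [ev1]
lemma lv1_z : lv1 zq = ε := by rw [lv1, lv_qm]; simp [ev1]
lemma lv2_x : lv2 xq = ε := by rw [lv2, lv_qm]; simp [ev2]
lemma lv2_y : lv2 yq = ε := by rw [lv2, lv_qm]; simp [ev2]
lemma lv2_z : lv2 zq = 1 := by rw [lv2, lv_qm]; simp [ev2]

lemma eps_pow3' (k : ℕ) : (ε : DualNumber ℂ)^(k+2+1) = 0 := by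
  rw [pow_succ, eps_pow_succ_succ, zero_mul]

def Fl (φ : Rq →ₐ[ℂ] DualNumber ℂ) : Rq →ₗ[ℂ] ℂ :=
  (TrivSqZeroExt.fstHom ℂ ℂ ℂ).toLinearMap.comp φ.toLinearMap
def Sl (φ : Rq →ₐ[ℂ] DualNumber ℂ) : Rq →ₗ[ℂ] ℂ :=
  (TrivSqZeroExt.sndHom ℂ ℂ).comp φ.toLinearMap

lemma Fl_apply (φ : Rq →ₐ[ℂ] DualNumber ℂ) (r : Rq) : Fl φ r = (φ r).fst := rfl
lemma Sl_apply (φ : Rq →ₐ[ℂ] DualNumber ℂ) (r : Rq) : Sl φ r = (φ r).snd := rfl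

lemma Bv_vals (e : ℕ) : Bv e 0 = xq^(e+1) ∧ Bv e 1 = xq^e*yq ∧ Bv e 2 = yq^(e+1) ∧
    Bv e 3 = yq^e*zq ∧ Bv e 4 = zq^(e+1) ∧ Bv e 5 = zq^e*xq :=
  ⟨rfl, rfl, rfl, rfl, rfl, rfl⟩

lemma indep_Bv (k : ℕ) : LinearIndependent ℂ (Bv (k+2)) := by
  obtain ⟨b0, b1, b2, b3, b4, b5⟩ := Bv_vals (k+2)
  have hv0 : lv0 (Bv (k+2) 0) = 1 ∧ lv0 (Bv (k+2) 1) = ε ∧ lv0 (Bv (k+2) 2) = 0 ∧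
      lv0 (Bv (k+2) 3) = 0 ∧ lv0 (Bv (k+2) 4) = 0 ∧ lv0 (Bv (k+2) 5) = 0 := by
    rw [b0, b1, b2, b3, b4, b5]
    refine ⟨?_, ?_, ?_, ?_, ?_, ?_⟩ <;>
      simp [map_mul, map_pow, lv0_x, lv0_y, lv0_z, eps_pow_succ_succ, eps_pow3']
  have hv1 : lv1 (Bv (k+2) 0) = 0 ∧ lv1 (Bv (k+2) 1) = 0 ∧ lv1 (Bv (k+2) 2) = 1 ∧
      lv1 (Bv (k+2) 3) = ε ∧ lv1 (Bv (k+2) 4) = 0 ∧ lv1 (Bv (k+2) 5) = 0 := by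
    rw [b0, b1, b2, b3, b4, b5]
    refine ⟨?_, ?_, ?_, ?_, ?_, ?_⟩ <;>
      simp [map_mul, map_pow, lv1_x, lv1_y, lv1_z, eps_pow_succ_succ, eps_pow3']
  have hv2 : lv2 (Bv (k+2) 0) = 0 ∧ lv2 (Bv (k+2) 1) = 0 ∧ lv2 (Bv (k+2) 2) = 0 ∧
      lv2 (Bv (k+2) 3) = 0 ∧ lv2 (Bv (k+2) 4) = 1 ∧ lv2 (Bv (k+2) 5) = ε := by
    rw [b0, b1, b2, b3, b4, b5]
    refine ⟨?_, ?_, ?_, ?_, ?_, ?_⟩ <;>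
      simp [map_mul, map_pow, lv2_x, lv2_y, lv2_z, eps_pow_succ_succ, eps_pow3']
  rw [Fintype.linearIndependent_iff]
  intro g hg
  have key : ∀ L : Rq →ₗ[ℂ] ℂ,
      g 0 * L (Bv (k+2) 0) + g 1 * L (Bv (k+2) 1) + g 2 * L (Bv (k+2) 2) +
      g 3 * L (Bv (k+2) 3) + g 4 * L (Bv (k+2) 4) + g 5 * L (Bv (k+2) 5) = 0 := by
    intro L
    have h := congrArg L hg
    rw [map_sum, map_zero, Fin.sum_univ_six] at h
    simpa [map_smul, smul_eq_mul, add_assoc] using h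
  have e0 := key (Fl lv0)
  have e1 := key (Sl lv0)
  have e2 := key (Fl lv1)
  have e3 := key (Sl lv1)
  have e4 := key (Fl lv2)
  have e5 := key (Sl lv2)
  rw [Fl_apply, Fl_apply, Fl_apply, Fl_apply, Fl_apply, Fl_apply] at e0 e2 e4
  rw [Sl_apply, Sl_apply, Sl_apply, Sl_apply, Sl_apply, Sl_apply] at e1 e3 e5
  rw [hv0.1, hv0.2.1, hv0.2.2.1, hv0.2.2.2.1, hv0.2.2.2.2.1, hv0.2.2.2.2.2] at e0 e1
  rw [hv1.1, hv1.2.1, hv1.2.2.1, hv1.2.2.2.1, hv1.2.2.2.2.1, hv1.2.2.2.2.2] at e2 e3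
  rw [hv2.1, hv2.2.1, hv2.2.2.1, hv2.2.2.2.1, hv2.2.2.2.2.1, hv2.2.2.2.2.2] at e4 e5
  simp only [TrivSqZeroExt.fst_one, TrivSqZeroExt.snd_one, TrivSqZeroExt.fst_zero,
    TrivSqZeroExt.snd_zero, DualNumber.fst_eps, DualNumber.snd_eps, mul_zero, mul_one,
    add_zero, zero_add] at e0 e1 e2 e3 e4 e5
  intro i
  fin_cases i
  · exact e0
  · exact e1
  · exact e2
  · exact e3
  · exact e4
  · exact e5

/-! ### lower bound machinery -/

lemma mono_mem (a b c : ℕ) : (X 0^a*X 1^b*X 2^c : S3) ∈ homogeneousSubmodule (Fin 3) ℂ (a+b+c) := by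
  rw [mem_homogeneousSubmodule]
  have h := (((isHomogeneous_X ℂ (0:Fin 3)).pow a).mul ((isHomogeneous_X ℂ (1:Fin 3)).pow b)).mul
    ((isHomogeneous_X ℂ (2:Fin 3)).pow c)
  simpa using h

lemma qm_mono_mem (a b c : ℕ) : xq^a*yq^b*zq^c ∈ Qn (a+b+c) :=
  Submodule.mem_map.mpr ⟨_, mono_mem a b c, by rw [show ((Ideal.Quotient.mkₐ ℂ Ic).toLinearMap
    (X 0^a*X 1^b*X 2^c : S3)) = qm (X 0^a*X 1^b*X 2^c) from rfl, qm_mono]⟩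

lemma lb {n k : ℕ} (b : Fin k → Rq) (hmem : ∀ i, b i ∈ Qn n) (hli : LinearIndependent ℂ b)
    [Module.Finite ℂ (Qn n)] : k ≤ Module.finrank ℂ (Qn n) := by
  have hli' : LinearIndependent ℂ (fun i => (⟨b i, hmem i⟩ : Qn n)) := by
    apply LinearIndependent.of_comp (Qn n).subtype
    exact hli
  simpa using hli'.fintype_card_le_finrank

lemma Bv_mem (k : ℕ) : ∀ i, Bv (k+2) i ∈ Qn (k+3) := by
  obtain ⟨b0, b1, b2, b3, b4, b5⟩ := Bv_vals (k+2)
  intro i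
  fin_cases i
  · show Bv (k+2) 0 ∈ Qn (k+3)
    rw [b0]; simpa [show k+2+1+0+0 = k+3 by omega] using qm_mono_mem (k+2+1) 0 0
  · show Bv (k+2) 1 ∈ Qn (k+3)
    rw [b1]; simpa [show k+2+1+0 = k+3 by omega] using qm_mono_mem (k+2) 1 0
  · show Bv (k+2) 2 ∈ Qn (k+3)
    rw [b2]; simpa [show 0+(k+2+1)+0 = k+3 by omega] using qm_mono_mem 0 (k+2+1) 0
  · show Bv (k+2) 3 ∈ Qn (k+3)
    rw [b3]; simpa [show 0+(k+2)+1 = k+3 by omega] using qm_mono_mem 0 (k+2) 1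
  · show Bv (k+2) 4 ∈ Qn (k+3)
    rw [b4]; simpa [show 0+0+(k+2+1) = k+3 by omega] using qm_mono_mem 0 0 (k+2+1)
  · show Bv (k+2) 5 ∈ Qn (k+3)
    rw [b5, mul_comm]; simpa [show 1+0+(k+2) = k+3 by omega] using qm_mono_mem 1 0 (k+2)

theorem dim_high (m : ℕ) : Module.finrank ℂ (Qn (m+4)) = 6 := by
  have hspan := Qn_le_span (Bv (m+3)) (fun a b c h => span_high m a b c h)
  haveI := Qn_fd _ hspan
  refine le_antisymm (Qn_ub _ hspan) ?_
  have hmem : ∀ i, Bv (m+1+2) i ∈ Qn (m+4) := by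
    have := Bv_mem (m+1)
    simpa [show m+1+3 = m+4 by omega] using this
  have : 6 ≤ Module.finrank ℂ (Qn (m+4)) :=
    lb (b := Bv (m+1+2)) hmem (indep_Bv (m+1))
  exact this

lemma indep_B0 : LinearIndependent ℂ B0v := by
  rw [Fintype.linearIndependent_iff]
  intro g hg
  have h := congrArg (Fl lv0) hg
  rw [map_sum, map_zero, Fin.sum_univ_one] at h
  rw [show B0v 0 = 1 from rfl] at h
  simp only [map_smul, smul_eq_mul, Fl_apply, map_one, TrivSqZeroExt.fst_one, mul_one] at h
  intro i
  fin_cases i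
  exact h

lemma indep_B1 : LinearIndependent ℂ B1v := by
  rw [Fintype.linearIndependent_iff]
  intro g hg
  have key : ∀ L : Rq →ₗ[ℂ] ℂ, g 0 * L (B1v 0) + g 1 * L (B1v 1) + g 2 * L (B1v 2) = 0 := by
    intro L
    have h := congrArg L hg
    rw [map_sum, map_zero, Fin.sum_univ_three] at h
    simpa [map_smul, smul_eq_mul] using h
  have e0 := key (Fl lv0)
  have e1 := key (Fl lv1)
  have e2 := key (Fl lv2)
  simp only [show B1v 0 = xq from rfl, show B1v 1 = yq from rfl, show B1v 2 = zq from rfl,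
    Fl_apply, lv0_x, lv0_y, lv0_z, lv1_x, lv1_y, lv1_z, lv2_x, lv2_y, lv2_z,
    TrivSqZeroExt.fst_one, DualNumber.fst_eps, mul_one, mul_zero, add_zero, zero_add]
    at e0 e1 e2
  intro i
  fin_cases i
  · exact e0
  · exact e1
  · exact e2

lemma indep_B2 : LinearIndependent ℂ B2v := by
  rw [Fintype.linearIndependent_iff]
  intro g hg
  have key : ∀ L : Rq →ₗ[ℂ] ℂ,
      g 0 * L (B2v 0) + g 1 * L (B2v 1) + g 2 * L (B2v 2) +
      g 3 * L (B2v 3) + g 4 * L (B2v 4) + g 5 * L (B2v 5) = 0 := by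
    intro L
    have h := congrArg L hg
    rw [map_sum, map_zero, Fin.sum_univ_six] at h
    simpa [map_smul, smul_eq_mul, add_assoc] using h
  have e0 := key (Fl lv0)
  have e1 := key (Sl lv0)
  have e2 := key (Fl lv1)
  have e3 := key (Sl lv1)
  have e4 := key (Fl lv2)
  have e5 := key (Sl lv2)
  simp only [show B2v 0 = xq^2 from rfl, show B2v 1 = yq^2 from rfl, show B2v 2 = zq^2 from rfl,
    show B2v 3 = xq*yq from rfl, show B2v 4 = yq*zq from rfl, show B2v 5 = xq*zq from rfl,
    Fl_apply, Sl_apply, map_mul, map_pow, lv0_x, lv0_y, lv0_z, lv1_x, lv1_y, lv1_z,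
    lv2_x, lv2_y, lv2_z, eps_sq, eps_mul_eps, one_pow, one_mul, mul_one,
    TrivSqZeroExt.fst_one, TrivSqZeroExt.snd_one, TrivSqZeroExt.fst_zero, TrivSqZeroExt.snd_zero,
    DualNumber.fst_eps, DualNumber.snd_eps, mul_zero, add_zero, zero_add] at e0 e1 e2 e3 e4 e5
  intro i
  fin_cases i
  · exact e0
  · exact e2
  · exact e4
  · show g 3 = 0
    linear_combination (e1 + e3 - e5) / 2
  · show g 4 = 0
    linear_combination (e3 + e5 - e1) / 2
  · show g 5 = 0
    linear_combination (e1 + e5 - e3) / 2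

theorem dim_0 : Module.finrank ℂ (Qn 0) = 1 := by
  have hspan := Qn_le_span B0v span0
  haveI := Qn_fd _ hspan
  refine le_antisymm (Qn_ub _ hspan) ?_
  refine lb B0v (fun i => ?_) indep_B0
  fin_cases i
  show (1:Rq) ∈ Qn 0
  simpa using qm_mono_mem 0 0 0

theorem dim_1 : Module.finrank ℂ (Qn 1) = 3 := by
  have hspan := Qn_le_span B1v span1
  haveI := Qn_fd _ hspan
  refine le_antisymm (Qn_ub _ hspan) ?_
  refine lb B1v (fun i => ?_) indep_B1
  fin_cases i
  · show xq ∈ Qn 1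
    simpa using qm_mono_mem 1 0 0
  · show yq ∈ Qn 1
    simpa using qm_mono_mem 0 1 0
  · show zq ∈ Qn 1
    simpa using qm_mono_mem 0 0 1

theorem dim_2 : Module.finrank ℂ (Qn 2) = 6 := by
  have hspan := Qn_le_span B2v span2
  haveI := Qn_fd _ hspan
  refine le_antisymm (Qn_ub _ hspan) ?_
  refine lb B2v (fun i => ?_) indep_B2
  fin_cases i
  · show xq^2 ∈ Qn 2
    simpa using qm_mono_mem 2 0 0
  · show yq^2 ∈ Qn 2
    simpa using qm_mono_mem 0 2 0
  · show zq^2 ∈ Qn 2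
    simpa using qm_mono_mem 0 0 2
  · show xq*yq ∈ Qn 2
    simpa using qm_mono_mem 1 1 0
  · show yq*zq ∈ Qn 2
    simpa using qm_mono_mem 0 1 1
  · show xq*zq ∈ Qn 2
    simpa using qm_mono_mem 1 0 1

lemma hc_monomial (n : ℕ) (w : Fin 3 →₀ ℕ) (t : ℂ) :
    homogeneousComponent n (monomial w t : S3) = if w.degree = n then monomial w t else 0 := by
  ext d
  rw [coeff_homogeneousComponent]
  by_cases hwd : w = d
  · subst hwd
    by_cases hw : w.degree = n <;> simp [hw]
  · by_cases hw : w.degree = n <;> simp [hw, coeff_monomial, hwd]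

lemma degree_add' (u v : Fin 3 →₀ ℕ) : (u+v).degree = u.degree + v.degree := by
  simp [Finsupp.degree_eq_weight_one, map_add]

lemma hc_mul_hom (c b : S3) (hb : b ∈ homogeneousSubmodule (Fin 3) ℂ 3) :
    homogeneousComponent 3 (c * b) = C (coeff 0 c) * b := by
  induction c using MvPolynomial.induction_on' with
  | monomial u a =>
    conv_lhs => rw [b.as_sum]
    conv_rhs => rw [b.as_sum]
    rw [Finset.mul_sum, map_sum, Finset.mul_sum]
    apply Finset.sum_congr rfl
    intro v hv
    have hvdeg : v.degree = 3 := by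
      rw [mem_homogeneousSubmodule] at hb
      have := hb (mem_support_iff.mp hv)
      rwa [Finsupp.degree_eq_weight_one]
    rw [monomial_mul, hc_monomial, degree_add', hvdeg]
    rw [C_mul_monomial, coeff_monomial]
    by_cases hu : u = 0
    · subst hu
      simp
    · have : ¬ (u.degree + 3 = 3) := by
        have : u.degree ≠ 0 := fun h => hu ((Finsupp.degree_eq_zero_iff u).mp h)
        omega
      rw [if_neg this, if_neg hu]
      simp
  | add p q hp hq =>
    rw [add_mul, map_add, hp, hq, coeff_add, map_add, add_mul]

lemma fx_mem : pderiv (0:Fin 3) FF ∈ homogeneousSubmodule (Fin 3) ℂ 3 := by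
  have e : pderiv (0:Fin 3) FF =
      ((X 0^1*X 1^2*X 2^0) + (X 0^1*X 1^2*X 2^0)) + ((X 0^1*X 1^0*X 2^2) + (X 0^1*X 1^0*X 2^2))
      - ((X 0^1*X 1^1*X 2^1) + (X 0^1*X 1^1*X 2^1) + (X 0^1*X 1^1*X 2^1) + (X 0^1*X 1^1*X 2^1))
      - ((X 0^0*X 1^2*X 2^1) + (X 0^0*X 1^2*X 2^1)) - ((X 0^0*X 1^1*X 2^2) + (X 0^0*X 1^1*X 2^2)) := by
    rw [hfx]; ring
  rw [e]
  have m1 : (X 0^1*X 1^2*X 2^0 : S3) ∈ homogeneousSubmodule (Fin 3) ℂ 3 := by simpa using mono_mem 1 2 0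
  have m2 : (X 0^1*X 1^0*X 2^2 : S3) ∈ homogeneousSubmodule (Fin 3) ℂ 3 := by simpa using mono_mem 1 0 2
  have m3 : (X 0^1*X 1^1*X 2^1 : S3) ∈ homogeneousSubmodule (Fin 3) ℂ 3 := by simpa using mono_mem 1 1 1
  have m4 : (X 0^0*X 1^2*X 2^1 : S3) ∈ homogeneousSubmodule (Fin 3) ℂ 3 := by simpa using mono_mem 0 2 1
  have m5 : (X 0^0*X 1^1*X 2^2 : S3) ∈ homogeneousSubmodule (Fin 3) ℂ 3 := by simpa using mono_mem 0 1 2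
  exact Submodule.sub_mem _ (Submodule.sub_mem _ (Submodule.add_mem _ (Submodule.add_mem _ m1 m1)
    (Submodule.add_mem _ m2 m2)) (Submodule.add_mem _ (Submodule.add_mem _
    (Submodule.add_mem _ m3 m3) m3) m3)) (Submodule.add_mem _ m4 m4) |>.sub
    (Submodule.add_mem _ m5 m5)

lemma fy_mem : pderiv (1:Fin 3) FF ∈ homogeneousSubmodule (Fin 3) ℂ 3 := by
  have e : pderiv (1:Fin 3) FF =
      ((X 0^2*X 1^1*X 2^0) + (X 0^2*X 1^1*X 2^0)) + ((X 0^0*X 1^1*X 2^2) + (X 0^0*X 1^1*X 2^2))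
      - ((X 0^2*X 1^0*X 2^1) + (X 0^2*X 1^0*X 2^1))
      - ((X 0^1*X 1^1*X 2^1) + (X 0^1*X 1^1*X 2^1) + (X 0^1*X 1^1*X 2^1) + (X 0^1*X 1^1*X 2^1))
      - ((X 0^1*X 1^0*X 2^2) + (X 0^1*X 1^0*X 2^2)) := by
    rw [hfy]; ring
  rw [e]
  have m1 : (X 0^2*X 1^1*X 2^0 : S3) ∈ homogeneousSubmodule (Fin 3) ℂ 3 := by simpa using mono_mem 2 1 0
  have m2 : (X 0^0*X 1^1*X 2^2 : S3) ∈ homogeneousSubmodule (Fin 3) ℂ 3 := by simpa using mono_mem 0 1 2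
  have m3 : (X 0^2*X 1^0*X 2^1 : S3) ∈ homogeneousSubmodule (Fin 3) ℂ 3 := by simpa using mono_mem 2 0 1
  have m4 : (X 0^1*X 1^1*X 2^1 : S3) ∈ homogeneousSubmodule (Fin 3) ℂ 3 := by simpa using mono_mem 1 1 1
  have m5 : (X 0^1*X 1^0*X 2^2 : S3) ∈ homogeneousSubmodule (Fin 3) ℂ 3 := by simpa using mono_mem 1 0 2
  exact ((((Submodule.add_mem _ (Submodule.add_mem _ m1 m1) (Submodule.add_mem _ m2 m2)).sub
    (Submodule.add_mem _ m3 m3)).sub (Submodule.add_mem _ (Submodule.add_mem _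
    (Submodule.add_mem _ m4 m4) m4) m4)).sub (Submodule.add_mem _ m5 m5))

lemma fz_mem : pderiv (2:Fin 3) FF ∈ homogeneousSubmodule (Fin 3) ℂ 3 := by
  have e : pderiv (2:Fin 3) FF =
      ((X 0^0*X 1^2*X 2^1) + (X 0^0*X 1^2*X 2^1)) + ((X 0^2*X 1^0*X 2^1) + (X 0^2*X 1^0*X 2^1))
      - ((X 0^2*X 1^1*X 2^0) + (X 0^2*X 1^1*X 2^0)) - ((X 0^1*X 1^2*X 2^0) + (X 0^1*X 1^2*X 2^0))
      - ((X 0^1*X 1^1*X 2^1) + (X 0^1*X 1^1*X 2^1) + (X 0^1*X 1^1*X 2^1) + (X 0^1*X 1^1*X 2^1)) := by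
    rw [hfz]; ring
  rw [e]
  have m1 : (X 0^0*X 1^2*X 2^1 : S3) ∈ homogeneousSubmodule (Fin 3) ℂ 3 := by simpa using mono_mem 0 2 1
  have m2 : (X 0^2*X 1^0*X 2^1 : S3) ∈ homogeneousSubmodule (Fin 3) ℂ 3 := by simpa using mono_mem 2 0 1
  have m3 : (X 0^2*X 1^1*X 2^0 : S3) ∈ homogeneousSubmodule (Fin 3) ℂ 3 := by simpa using mono_mem 2 1 0
  have m4 : (X 0^1*X 1^2*X 2^0 : S3) ∈ homogeneousSubmodule (Fin 3) ℂ 3 := by simpa using mono_mem 1 2 0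
  have m5 : (X 0^1*X 1^1*X 2^1 : S3) ∈ homogeneousSubmodule (Fin 3) ℂ 3 := by simpa using mono_mem 1 1 1
  exact ((((Submodule.add_mem _ (Submodule.add_mem _ m1 m1) (Submodule.add_mem _ m2 m2)).sub
    (Submodule.add_mem _ m3 m3)).sub (Submodule.add_mem _ m4 m4)).sub
    (Submodule.add_mem _ (Submodule.add_mem _ (Submodule.add_mem _ m5 m5) m5) m5))

def G3 (g : Fin 7 → ℂ) : S3 :=
  C (g 0) * (X 0^3*X 1^0*X 2^0) + C (g 1) * (X 0^0*X 1^3*X 2^0) + C (g 2) * (X 0^0*X 1^0*X 2^3) +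
  C (g 3) * (X 0^2*X 1^0*X 2^1) + C (g 4) * (X 0^1*X 1^0*X 2^2) +
  C (g 5) * (X 0^0*X 1^2*X 2^1) + C (g 6) * (X 0^0*X 1^1*X 2^2)

lemma G3_mem (g : Fin 7 → ℂ) : G3 g ∈ homogeneousSubmodule (Fin 3) ℂ 3 := by
  rw [G3]
  have s : ∀ (a : ℂ) (p : S3), p ∈ homogeneousSubmodule (Fin 3) ℂ 3 →
      C a * p ∈ homogeneousSubmodule (Fin 3) ℂ 3 := by
    intro a p hp
    rw [← smul_eq_C_mul]
    exact Submodule.smul_mem _ a hp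
  refine Submodule.add_mem _ (Submodule.add_mem _ (Submodule.add_mem _ (Submodule.add_mem _
    (Submodule.add_mem _ (Submodule.add_mem _ (s _ _ ?_) (s _ _ ?_)) (s _ _ ?_)) (s _ _ ?_))
    (s _ _ ?_)) (s _ _ ?_)) (s _ _ ?_)
  · simpa using mono_mem 3 0 0
  · simpa using mono_mem 0 3 0
  · simpa using mono_mem 0 0 3
  · simpa using mono_mem 2 0 1
  · simpa using mono_mem 1 0 2
  · simpa using mono_mem 0 2 1
  · simpa using mono_mem 0 1 2

lemma indep_B3 : LinearIndependent ℂ B3v := by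
  rw [Fintype.linearIndependent_iff]
  intro g hg
  have hGq : qm (G3 g) = 0 := by
    rw [Fin.sum_univ_seven] at hg
    rw [show B3v 0 = xq^3 from rfl, show B3v 1 = yq^3 from rfl, show B3v 2 = zq^3 from rfl,
        show B3v 3 = xq^2*zq from rfl, show B3v 4 = xq*zq^2 from rfl,
        show B3v 5 = yq^2*zq from rfl, show B3v 6 = yq*zq^2 from rfl] at hg
    have e : qm (G3 g) = g 0 • (xq^3) + g 1 • (yq^3) + g 2 • (zq^3) + g 3 • (xq^2*zq) +
        g 4 • (xq*zq^2) + g 5 • (yq^2*zq) + g 6 • (yq*zq^2) := by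
      simp only [G3, ← smul_eq_C_mul, map_add, map_smul, map_mul, map_pow, pow_zero, pow_one,
        mul_one, one_mul]
    rw [e]
    exact hg
  have hGI : G3 g ∈ Ic := by
    have h' : Ideal.Quotient.mk Ic (G3 g) = 0 := by
      rw [← Ideal.Quotient.mkₐ_eq_mk (R₁ := ℂ)]
      exact hGq
    rwa [Ideal.Quotient.eq_zero_iff_mem] at h'
  rw [Ic] at hGI
  obtain ⟨cf, hcf⟩ := Ideal.mem_span_range_iff_exists_fun.mp hGI
  rw [Fin.sum_univ_three] at hcf
  have hc3 := congrArg (homogeneousComponent 3) hcf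
  rw [map_add, map_add, hc_mul_hom _ _ fx_mem, hc_mul_hom _ _ fy_mem, hc_mul_hom _ _ fz_mem,
      homogeneousComponent_of_mem (G3_mem g), if_pos rfl] at hc3
  rw [hfx, hfy, hfz, G3] at hc3
  have v0 := congrArg (aeval (![1,0,0] : Fin 3 → ℂ)) hc3
  have v1 := congrArg (aeval (![0,1,0] : Fin 3 → ℂ)) hc3
  have v2 := congrArg (aeval (![0,0,1] : Fin 3 → ℂ)) hc3
  have v3 := congrArg (aeval (![1,1,0] : Fin 3 → ℂ)) hc3
  have v4 := congrArg (aeval (![0,1,1] : Fin 3 → ℂ)) hc3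
  have v5 := congrArg (aeval (![1,0,1] : Fin 3 → ℂ)) hc3
  have v6 := congrArg (aeval (![1,1,1] : Fin 3 → ℂ)) hc3
  have v7 := congrArg (aeval (![1,2,0] : Fin 3 → ℂ)) hc3
  have v8 := congrArg (aeval (![0,1,2] : Fin 3 → ℂ)) hc3
  have v9 := congrArg (aeval (![2,1,1] : Fin 3 → ℂ)) hc3
  simp only [map_add, map_sub, map_mul, map_pow, map_ofNat, aeval_C, aeval_X,
    Matrix.cons_val_zero, Matrix.cons_val_one, Matrix.head_cons, Matrix.cons_val_two,
    Matrix.tail_cons, Algebra.algebraMap_self, RingHom.id_apply] at v0 v1 v2 v3 v4 v5 v6 v7 v8 v9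
  norm_num at v0 v1 v2 v3 v4 v5 v6 v7 v8 v9
  intro i
  fin_cases i
  · show g 0 = 0
    linear_combination -v0
  · show g 1 = 0
    linear_combination -v1
  · show g 2 = 0
    linear_combination -v2
  · show g 3 = 0
    linear_combination 3*v0 - (1/2)*v4 + v6 - (1/2)*v9
  · show g 4 = 0
    linear_combination (3/2)*v0 - 7*v1 + v2 - 5*v3 + (1/2)*v4 - v5 - v6 + (3/2)*v7 + (1/2)*v9
  · show g 5 = 0
    linear_combination -(1/2)*v0 + (9/2)*v1 - 2*v2 + v3 - 2*v4 - (1/2)*v7 + (1/2)*v8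
  · show g 6 = 0
    linear_combination -2*v0 + (9/2)*v1 + 3*v2 + 3*v3 + v4 - v7 - (1/2)*v8

theorem dim_3 : Module.finrank ℂ (Qn 3) = 7 := by
  have hspan := Qn_le_span B3v span3
  haveI := Qn_fd _ hspan
  refine le_antisymm (Qn_ub _ hspan) ?_
  refine lb B3v (fun i => ?_) indep_B3
  fin_cases i
  · show xq^3 ∈ Qn 3
    simpa using qm_mono_mem 3 0 0
  · show yq^3 ∈ Qn 3
    simpa using qm_mono_mem 0 3 0
  · show zq^3 ∈ Qn 3
    simpa using qm_mono_mem 0 0 3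
  · show xq^2*zq ∈ Qn 3
    simpa using qm_mono_mem 2 0 1
  · show xq*zq^2 ∈ Qn 3
    simpa using qm_mono_mem 1 0 2
  · show yq^2*zq ∈ Qn 3
    simpa using qm_mono_mem 0 2 1
  · show yq*zq^2 ∈ Qn 3
    simpa using qm_mono_mem 0 1 2

theorem milnor_dims_three_cuspidal_quartic (f : S3)
    (hf : f = X 0 ^ 2 * X 1 ^ 2 + X 1 ^ 2 * X 2 ^ 2 + X 2 ^ 2 * X 0 ^ 2
      - 2 * X 0 * X 1 * X 2 * (X 0 + X 1 + X 2)) :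
    gradedDim (jacobianIdeal f) 0 = 1 ∧
    gradedDim (jacobianIdeal f) 1 = 3 ∧
    gradedDim (jacobianIdeal f) 2 = 6 ∧
    gradedDim (jacobianIdeal f) 3 = 7 ∧
    (∀ k : ℕ, 4 ≤ k → gradedDim (jacobianIdeal f) k = 6) := by
  have hI : jacobianIdeal f = Ic := by rw [hf]; rfl
  have hgd : ∀ k, gradedDim (jacobianIdeal f) k = Module.finrank ℂ (Qn k) := by
    intro k
    rw [hI]
    rfl
  refine ⟨by rw [hgd]; exact dim_0, by rw [hgd]; exact dim_1, by rw [hgd]; exact dim_2,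
    by rw [hgd]; exact dim_3, ?_⟩
  intro k hk
  obtain ⟨m, rfl⟩ : ∃ m, k = m + 4 := ⟨k - 4, by omega⟩
  rw [hgd]
  exact dim_high m

end
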